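/- Let $v:(0,\infty)\to\mathbb{R}$ be continuous with $v(x) \to C \in \mathbb{R}$ as $x\to\infty$. Then $\lim_{\mu\downarrow 0}\; \mu \sum_{k=1}^\infty e^{-\mu k - v(k)} = e^{-C}$. -/

import Mathlib

open Filter Set

private lemma aux_slope :
    Tendsto (fun μ : ℝ => μ / (1 - Real.exp (-μ))) (nhdsWithin 0 (Set.Ioi 0)) (nhds 1) := by
  have hd : HasDerivAt (fun x : ℝ => 1 - Real.exp (-x)) 1 0 := by
    have h1 : HasDerivAt (fun x : ℝ => Real.exp (-x)) (-1) 0 := by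
      have := (Real.hasDerivAt_exp (-0)).comp 0 (hasDerivAt_neg (0:ℝ))
      simpa [Function.comp_def] using this
    simpa [Pi.sub_def] using (hasDerivAt_const (0:ℝ) (1:ℝ)).sub h1
  have hs := hasDerivAt_iff_tendsto_slope.mp hd
  have hs' : Tendsto (fun μ : ℝ => (1 - Real.exp (-μ)) / μ)
      (nhdsWithin 0 (Set.Ioi 0)) (nhds 1) := by
    have hmono : nhdsWithin (0:ℝ) (Set.Ioi 0) ≤ nhdsWithin 0 {(0:ℝ)}ᶜ :=
      nhdsWithin_mono 0 (fun x hx => ne_of_gt hx)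
    have := hs.mono_left hmono
    refine this.congr (fun μ => ?_)
    simp [slope_def_field]
  have := hs'.inv₀ one_ne_zero
  simpa [inv_div] using this

private lemma aux_geom_tendsto :
    Tendsto (fun μ : ℝ => μ * (Real.exp (-μ) / (1 - Real.exp (-μ))))
      (nhdsWithin 0 (Set.Ioi 0)) (nhds 1) := by
  have hexp : Tendsto (fun μ : ℝ => Real.exp (-μ)) (nhdsWithin 0 (Set.Ioi 0)) (nhds 1) := by
    have : Continuous (fun μ : ℝ => Real.exp (-μ)) := Real.continuous_exp.comp continuous_neg
    simpa using (this.tendsto 0).mono_left nhdsWithin_le_nhds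
  have h := hexp.mul aux_slope
  have heq : ∀ μ : ℝ, Real.exp (-μ) * (μ / (1 - Real.exp (-μ)))
      = μ * (Real.exp (-μ) / (1 - Real.exp (-μ))) := by intro μ; ring
  simpa [heq] using h

private lemma aux_summable {r : ℝ} (h0 : 0 ≤ r) (h1 : r < 1) {b : ℕ → ℝ} {M : ℝ}
    (hM : ∀ k, |b k| ≤ M) : Summable (fun k : ℕ => r ^ (k + 1) * b k) := by
  have hgeo : Summable (fun k : ℕ => r ^ (k + 1) * M) := by
    have := ((summable_geometric_of_lt_one h0 h1).mul_left (r * M))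
    refine this.congr (fun k => ?_)
    rw [pow_succ]; ring
  refine Summable.of_norm_bounded hgeo (fun k => ?_)
  rw [norm_mul, norm_pow, Real.norm_eq_abs, Real.norm_eq_abs, abs_of_nonneg h0]
  exact mul_le_mul_of_nonneg_left (hM k) (pow_nonneg h0 _)

private lemma aux_tsum_geom {r : ℝ} (h0 : 0 ≤ r) (h1 : r < 1) :
    ∑' k : ℕ, r ^ (k + 1) = r / (1 - r) := by
  have : (fun k : ℕ => r ^ (k + 1)) = fun k : ℕ => r ^ k * r := by
    funext k; rw [pow_succ]
  rw [this, tsum_mul_right, tsum_geometric_of_lt_one h0 h1, div_eq_mul_inv, mul_comm]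

private lemma abel_zero (b : ℕ → ℝ) (hb : Tendsto b atTop (nhds 0)) :
    Tendsto (fun μ : ℝ => μ * ∑' k : ℕ, Real.exp (-μ) ^ (k + 1) * b k)
      (nhdsWithin 0 (Set.Ioi 0)) (nhds 0) := by
  obtain ⟨M, hM⟩ : ∃ M : ℝ, ∀ k, |b k| ≤ M := by
    obtain ⟨M, hM⟩ := (hb.abs.bddAbove_range).exists_ge 0
    exact ⟨M, fun k => hM.2 _ ⟨k, rfl⟩⟩
  rw [NormedAddCommGroup.tendsto_nhds_zero]
  intro ε hε
  obtain ⟨N, hN⟩ := (Metric.tendsto_atTop.mp hb (ε/4) (by linarith)).imp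
    (fun N h k hk => by simpa [Real.dist_eq] using h k hk)
  set S : ℝ := ∑ k ∈ Finset.range N, |b k| with hS
  have hSnn : 0 ≤ S := Finset.sum_nonneg fun _ _ => abs_nonneg _
  have hE1 : ∀ᶠ μ in nhdsWithin 0 (Set.Ioi 0),
      μ * (Real.exp (-μ) / (1 - Real.exp (-μ))) < 2 :=
    aux_geom_tendsto.eventually_lt_const (by norm_num)
  have hE2 : ∀ᶠ μ in nhdsWithin 0 (Set.Ioi 0), μ * S < ε / 2 := by
    have hm : Tendsto (fun μ : ℝ => μ * S) (nhdsWithin 0 (Set.Ioi 0)) (nhds 0) := by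
      have := (tendsto_id.mono_left (nhdsWithin_le_nhds
        (a := (0:ℝ)) (s := Set.Ioi 0))).mul_const S
      simpa using this
    exact hm.eventually_lt_const (by linarith)
  filter_upwards [hE1, hE2, self_mem_nhdsWithin] with μ h1 h2 hμ
  have hμpos : (0:ℝ) < μ := hμ
  set r : ℝ := Real.exp (-μ) with hr
  have hr0 : 0 < r := Real.exp_pos _
  have hr1 : r < 1 := Real.exp_lt_one_iff.mpr (by linarith)
  have hsum : Summable (fun k : ℕ => r ^ (k + 1) * b k) := aux_summable hr0.le hr1 hM
  have hsumabs : Summable (fun k : ℕ => r ^ (k + 1) * |b k|) :=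
    aux_summable hr0.le hr1 (fun k => abs_abs (b k) ▸ hM k)
  -- bound the tsum of absolute values
  have hsplit := Summable.sum_add_tsum_nat_add (f := fun k : ℕ => r ^ (k + 1) * |b k|) N hsumabs
  have hhead : ∑ k ∈ Finset.range N, r ^ (k + 1) * |b k| ≤ S := by
    refine Finset.sum_le_sum fun k _ => ?_
    have : r ^ (k + 1) ≤ 1 := pow_le_one₀ hr0.le hr1.le
    nlinarith [abs_nonneg (b k), pow_nonneg hr0.le (k+1)]
  have htail : ∑' k : ℕ, r ^ (k + N + 1) * |b (k + N)| ≤ (ε/4) * (r / (1 - r)) := by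
    have h1' : ∀ k : ℕ, r ^ (k + N + 1) * |b (k + N)| ≤ (ε/4) * r ^ (k + 1) := by
      intro k
      have hb' : |b (k + N)| ≤ ε/4 := (hN (k + N) (Nat.le_add_left _ _)).le
      have hpow : r ^ (k + N + 1) ≤ r ^ (k + 1) :=
        pow_le_pow_of_le_one hr0.le hr1.le (by omega)
      calc r ^ (k + N + 1) * |b (k + N)| ≤ r ^ (k + 1) * (ε/4) := by
            apply mul_le_mul hpow hb' (abs_nonneg _) (pow_nonneg hr0.le _)
        _ = (ε/4) * r ^ (k + 1) := by ring
    have hsg : Summable (fun k : ℕ => (ε/4) * r ^ (k + 1)) := by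
      have := ((summable_geometric_of_lt_one hr0.le hr1).mul_left ((ε/4) * r))
      refine this.congr fun k => ?_
      rw [pow_succ]; ring
    have hst : Summable (fun k : ℕ => r ^ (k + N + 1) * |b (k + N)|) := by
      have := hsumabs.comp_injective (add_right_injective N)
      refine this.congr fun k => ?_
      simp [Function.comp, add_comm N k]
    calc ∑' k : ℕ, r ^ (k + N + 1) * |b (k + N)| ≤ ∑' k : ℕ, (ε/4) * r ^ (k + 1) :=
          Summable.tsum_le_tsum h1' hst hsg
      _ = (ε/4) * (r / (1 - r)) := by rw [tsum_mul_left, aux_tsum_geom hr0.le hr1]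
  have habs : ∑' k : ℕ, r ^ (k + 1) * |b k| ≤ S + (ε/4) * (r / (1 - r)) := by
    rw [← hsplit]
    refine add_le_add hhead ?_
    simpa [add_right_comm] using htail
  have hnorm : ‖∑' k : ℕ, r ^ (k + 1) * b k‖ ≤ ∑' k : ℕ, r ^ (k + 1) * |b k| := by
    have hs' : Summable (fun k : ℕ => ‖r ^ (k + 1) * b k‖) := by
      refine hsumabs.congr fun k => ?_
      rw [norm_mul, norm_pow, Real.norm_eq_abs, Real.norm_eq_abs, abs_of_nonneg hr0.le]
    refine (norm_tsum_le_tsum_norm hs').trans_eq (tsum_congr fun k => ?_)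
    rw [norm_mul, norm_pow, Real.norm_eq_abs, Real.norm_eq_abs, abs_of_nonneg hr0.le]
  calc ‖μ * ∑' k : ℕ, r ^ (k + 1) * b k‖
      = μ * ‖∑' k : ℕ, r ^ (k + 1) * b k‖ := by
        rw [norm_mul, Real.norm_eq_abs, abs_of_pos hμpos]
    _ ≤ μ * (S + (ε/4) * (r / (1 - r))) := by
        exact mul_le_mul_of_nonneg_left (hnorm.trans habs) hμpos.le
    _ = μ * S + (ε/4) * (μ * (r / (1 - r))) := by ring
    _ < ε/2 + (ε/4) * 2 := by
        have : (ε/4) * (μ * (r / (1 - r))) ≤ (ε/4) * 2 := by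
          apply mul_le_mul_of_nonneg_left h1.le (by linarith)
        linarith
    _ = ε := by ring

private lemma aux_geom_part :
    Tendsto (fun μ : ℝ => μ * ∑' k : ℕ, Real.exp (-μ) ^ (k + 1))
      (nhdsWithin 0 (Set.Ioi 0)) (nhds 1) := by
  refine aux_geom_tendsto.congr' ?_
  filter_upwards [self_mem_nhdsWithin] with μ hμ
  have hμpos : (0:ℝ) < μ := hμ
  rw [aux_tsum_geom (Real.exp_pos _).le (Real.exp_lt_one_iff.mpr (by linarith))]

/-- Let `v` be continuous on `(0,∞)` with `v(x) → C`. Then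
`μ ∑_{k ≥ 1} e^{-μ k - v(k)} → e^{-C}` as `μ ↓ 0`. -/
theorem mu_times_sum_tendsto
    (v : ℝ → ℝ) (C : ℝ)
    (hcont : ContinuousOn v (Set.Ioi 0))
    (hv : Tendsto v atTop (nhds C)) :
    Tendsto
      (fun μ : ℝ => μ *
        ∑' k : ℕ, Real.exp (-(μ * ((k : ℝ) + 1)) - v ((k : ℝ) + 1)))
      (nhdsWithin 0 (Set.Ioi 0))
      (nhds (Real.exp (-C))) := by
  set L : ℝ := Real.exp (-C) with hL
  set a : ℕ → ℝ := fun k => Real.exp (-(v ((k : ℝ) + 1))) with ha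
  have hatend : Tendsto a atTop (nhds L) := by
    have h1 : Tendsto (fun k : ℕ => ((k : ℝ) + 1)) atTop atTop :=
      tendsto_natCast_atTop_atTop.atTop_add tendsto_const_nhds
    exact (Real.continuous_exp.tendsto _).comp ((hv.comp h1).neg)
  set b : ℕ → ℝ := fun k => a k - L with hb
  have hbtend : Tendsto b atTop (nhds 0) := by
    simpa using hatend.sub_const L
  obtain ⟨M, hM⟩ : ∃ M : ℝ, ∀ k, |b k| ≤ M := by
    obtain ⟨M, hM⟩ := (hbtend.abs.bddAbove_range).exists_ge 0
    exact ⟨M, fun k => hM.2 _ ⟨k, rfl⟩⟩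
  have key := (abel_zero b hbtend).add (aux_geom_part.const_mul L)
  rw [show (0 : ℝ) + L * 1 = L by ring] at key
  refine key.congr' ?_
  filter_upwards [self_mem_nhdsWithin] with μ hμ
  have hμpos : (0:ℝ) < μ := hμ
  set r : ℝ := Real.exp (-μ) with hr
  have hr0 : 0 < r := Real.exp_pos _
  have hr1 : r < 1 := Real.exp_lt_one_iff.mpr (by linarith)
  have hsb : Summable (fun k : ℕ => r ^ (k + 1) * b k) := aux_summable hr0.le hr1 hM
  have hsg : Summable (fun k : ℕ => r ^ (k + 1) * L) :=
    aux_summable hr0.le hr1 (fun _ => le_refl |L|)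
  have hterm : ∀ k : ℕ, Real.exp (-(μ * ((k : ℝ) + 1)) - v ((k : ℝ) + 1))
      = r ^ (k + 1) * a k := by
    intro k
    rw [sub_eq_add_neg, Real.exp_add, ha]
    congr 1
    rw [hr, ← Real.exp_nat_mul]
    congr 1
    push_cast
    ring
  have hsum_eq : ∑' k : ℕ, Real.exp (-(μ * ((k : ℝ) + 1)) - v ((k : ℝ) + 1))
      = (∑' k : ℕ, r ^ (k + 1) * b k) + L * ∑' k : ℕ, r ^ (k + 1) := by
    rw [tsum_congr hterm]
    have : ∀ k : ℕ, r ^ (k + 1) * a k = r ^ (k + 1) * b k + r ^ (k + 1) * L := by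
      intro k; rw [hb]; ring
    rw [tsum_congr this, Summable.tsum_add hsb hsg, tsum_mul_right, mul_comm]
  rw [hsum_eq]
  ring
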